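/- arXiv:1308.1213 — 7 statements merged into one kernel-verified Lean document; each statement's English description precedes it below -/
import Mathlib

section
/- Let a : ℝ → ℝ be continuous and b, c : ℝ → ℝ be continuously differentiable with b(t)c(t) > 0 for all t ≥ 0. Fix v₁(0) > 0 and define v₁(t) = exp(−2∫₀ᵗ a(s) ds) · (b(t)c(0))/(c(t)b(0)) · v₁(0) and v₂(t) = √(b(t)c(t)v₁(t)). Then v₁(t) > 0 and v₂(t) > 0 for all t ≥ 0, and for every continuous input u : ℝ → ℝ, if p solves ṗ = a(t)p + b(t)u(t) with p(0) = 0 and x solves ẋ = −(v̇₁(t)/(2v₁(t)))x + (v₂(t)/√v₁(t))u(t) with x(0) = 0, then the outputs coincide: (v₂(t)/√v₁(t))·x(t) = c(t)·p(t) for all t ≥ 0. (Proposition 1, sufficiency: the time-varying capacitor–transformer circuit exactly implements the input-output map of the first-order linear time-varying system.) -/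
open intervalIntegral

private lemma ct_alg1 (E B C B0 C0 V DB DC A' : ℝ) (hE : E ≠ 0) (hB : B ≠ 0) (hC : C ≠ 0)
    (hB0 : B0 ≠ 0) (hC0 : C0 ≠ 0) (hV : V ≠ 0) :
    -((((E * (-2*A') * (B*C0) + E*(DB*C0)) * (C*B0) - E*(B*C0)*(DC*B0)) / (C*B0)^2 * V)
      / (2 * (E*(B*C0)/(C*B0)*V))) = A' - DB/(2*B) + DC/(2*C) := by
  field_simp
  ring

private lemma ct_alg2 (S B C DB DC A' X P U : ℝ) (hS : S ≠ 0) (hB : B ≠ 0) (hC : C ≠ 0)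
    (hS2 : S^2 = B*C) :
    (A' + DC/C) * (S*X - C*P)
      = (DB*C + B*DC)/(2*S)*X + S*((A' - DB/(2*B) + DC/(2*C))*X + S*U)
        - (DC*P + C*(A'*P + B*U)) := by
  field_simp
  linear_combination (B*DC*X + C*DB*X - 2*C*B*U*S) * hS2

/-- Proposition 1 (sufficiency): with the nonlinear inputs
`v₁(t) = e^{−2∫₀ᵗ a}·(b(t)c(0))/(c(t)b(0))·v₁(0)` and `v₂(t) = √(b(t)c(t)v₁(t))`, the
time-varying capacitor–transformer circuit `ẋ = −(v̇₁/(2v₁))x + (v₂/√v₁)u`, `x(0) = 0`, exactly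
implements the input-output map of `ṗ = a(t)p + b(t)u`, `y = c(t)p`, `p(0) = 0`: the nonlinear
inputs are positive and `(v₂(t)/√v₁(t))·x(t) = c(t)·p(t)` for all `t ≥ 0`. -/
theorem capacitor_transformer_implements_linear_system
    (a b c : ℝ → ℝ)
    (ha : Continuous a) (hb : ContDiff ℝ 1 b) (hc : ContDiff ℝ 1 c)
    (hbc : ∀ t ≥ (0:ℝ), b t * c t > 0)
    (v₁0 : ℝ) (hv₁0 : 0 < v₁0)
    (v₁ v₂ : ℝ → ℝ)
    (hv₁ : ∀ t, v₁ t
      = Real.exp (-2 * ∫ s in (0:ℝ)..t, a s) * (b t * c 0) / (c t * b 0) * v₁0)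
    (hv₂ : ∀ t, v₂ t = Real.sqrt (b t * c t * v₁ t)) :
    (∀ t ≥ (0:ℝ), 0 < v₁ t ∧ 0 < v₂ t) ∧
    (∀ u p x : ℝ → ℝ, Continuous u →
      p 0 = 0 → x 0 = 0 →
      (∀ t ≥ (0:ℝ), HasDerivAt p (a t * p t + b t * u t) t) →
      (∀ t ≥ (0:ℝ), HasDerivAt x
        (-(deriv v₁ t / (2 * v₁ t)) * x t + (v₂ t / Real.sqrt (v₁ t)) * u t) t) →
      ∀ t ≥ (0:ℝ), (v₂ t / Real.sqrt (v₁ t)) * x t = c t * p t) := by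
  -- basic nonvanishing
  have hbne : ∀ t ≥ (0:ℝ), b t ≠ 0 := fun t ht h => by
    have := hbc t ht; rw [h] at this; simp at this
  have hcne : ∀ t ≥ (0:ℝ), c t ≠ 0 := fun t ht h => by
    have := hbc t ht; rw [h] at this; simp at this
  have hb0 := hbne 0 le_rfl
  have hc0 := hcne 0 le_rfl
  -- positivity of the ratio
  have hratio : ∀ t ≥ (0:ℝ), 0 < (b t * c 0) / (c t * b 0) := by
    intro t ht
    have h1 : 0 < (b t * c 0) * (c t * b 0) := by
      have h2 : (b t * c 0) * (c t * b 0) = (b t * c t) * (b 0 * c 0) := by ring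
      rw [h2]; exact mul_pos (hbc t ht) (hbc 0 le_rfl)
    rcases mul_pos_iff.mp h1 with ⟨h2, h3⟩ | ⟨h2, h3⟩
    · exact div_pos h2 h3
    · exact div_pos_of_neg_of_neg h2 h3
  have hv₁pos : ∀ t ≥ (0:ℝ), 0 < v₁ t := by
    intro t ht
    rw [hv₁ t, mul_div_assoc]
    exact mul_pos (mul_pos (Real.exp_pos _) (hratio t ht)) hv₁0
  have hv₂pos : ∀ t ≥ (0:ℝ), 0 < v₂ t := by
    intro t ht
    rw [hv₂ t]
    exact Real.sqrt_pos.mpr (mul_pos (hbc t ht) (hv₁pos t ht))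
  refine ⟨fun t ht => ⟨hv₁pos t ht, hv₂pos t ht⟩, ?_⟩
  -- derivatives of the pieces
  have hbd : ∀ t, HasDerivAt b (deriv b t) t :=
    fun t => ((hb.differentiable one_ne_zero) t).hasDerivAt
  have hcd : ∀ t, HasDerivAt c (deriv c t) t :=
    fun t => ((hc.differentiable one_ne_zero) t).hasDerivAt
  have hdccont : Continuous (deriv c) := hc.continuous_deriv le_rfl
  set A : ℝ → ℝ := fun t => ∫ s in (0:ℝ)..t, a s with hA_def
  have hA : ∀ t, HasDerivAt A (a t) t := fun t =>
    integral_hasDerivAt_right (ha.intervalIntegrable 0 t)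
      (ha.stronglyMeasurableAtFilter _ _) ha.continuousAt
  have hv1fun : v₁ = fun t =>
      Real.exp (-2 * A t) * (b t * c 0) / (c t * b 0) * v₁0 := funext hv₁
  have hVd : ∀ t ≥ (0:ℝ), HasDerivAt v₁
      (((Real.exp (-2 * A t) * (-2 * a t) * (b t * c 0)
          + Real.exp (-2 * A t) * (deriv b t * c 0)) * (c t * b 0)
        - Real.exp (-2 * A t) * (b t * c 0) * (deriv c t * b 0)) / (c t * b 0) ^ 2 * v₁0) t := by
    intro t ht
    rw [hv1fun]
    have hE : HasDerivAt (fun t => Real.exp (-2 * A t))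
        (Real.exp (-2 * A t) * (-2 * a t)) t := ((hA t).const_mul (-2 : ℝ)).exp
    have hN := hE.mul ((hbd t).mul_const (c 0))
    have hD := (hcd t).mul_const (b 0)
    have hD0 : c t * b 0 ≠ 0 := mul_ne_zero (hcne t ht) hb0
    exact (hN.div hD hD0).mul_const v₁0
  -- key coefficient identity
  have hcoef : ∀ t ≥ (0:ℝ), -(deriv v₁ t / (2 * v₁ t))
      = a t - deriv b t / (2 * b t) + deriv c t / (2 * c t) := by
    intro t ht
    rw [(hVd t ht).deriv, hv₁ t]
    exact ct_alg1 _ _ _ _ _ _ _ _ _ (Real.exp_ne_zero _) (hbne t ht) (hcne t ht)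
      hb0 hc0 (ne_of_gt hv₁0)
  -- output coefficient identity
  have hout : ∀ t ≥ (0:ℝ), v₂ t / Real.sqrt (v₁ t) = Real.sqrt (b t * c t) := by
    intro t ht
    rw [hv₂ t, Real.sqrt_mul (hbc t ht).le, mul_div_assoc,
      div_self (Real.sqrt_ne_zero'.mpr (hv₁pos t ht)), mul_one]
  intro u p x hu hp0 hx0 hp hx t ht
  rw [hout t ht]
  -- the difference of outputs
  set g : ℝ → ℝ := fun s => Real.sqrt (b s * c s) with hg_def
  set w : ℝ → ℝ := fun s => g s * x s - c s * p s with hw_def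
  set lam : ℝ → ℝ := fun s => a s + deriv c s / c s with hlam_def
  set L : ℝ → ℝ := fun s => ∫ r in (0:ℝ)..s, lam r with hL_def
  set ψ : ℝ → ℝ := fun s => w s * Real.exp (-(L s)) with hψ_def
  have hwd : ∀ s ∈ Set.Icc (0:ℝ) t, HasDerivAt w (lam s * w s) s := by
    intro s hs
    have hs0 : (0:ℝ) ≤ s := hs.1
    have hbcpos := hbc s hs0
    have hx' := hx s hs0
    rw [hcoef s hs0, hout s hs0] at hx'
    have hgd : HasDerivAt g
        ((deriv b s * c s + b s * deriv c s) / (2 * Real.sqrt (b s * c s))) s :=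
      ((hbd s).mul (hcd s)).sqrt (ne_of_gt hbcpos)
    have h1 : HasDerivAt w _ s := (hgd.mul hx').sub ((hcd s).mul (hp s hs0))
    convert h1 using 1
    simp only [hlam_def, hw_def, hg_def]
    exact ct_alg2 _ _ _ _ _ _ _ _ _ (ne_of_gt (Real.sqrt_pos.mpr hbcpos))
      (hbne s hs0) (hcne s hs0) (Real.sq_sqrt hbcpos.le)
  have hlamC : ∀ s ≥ (0:ℝ), ContinuousAt lam s := fun s hs =>
    ha.continuousAt.add (hdccont.continuousAt.div hc.continuous.continuousAt (hcne s hs))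
  have hLd : ∀ s ∈ Set.Icc (0:ℝ) t, HasDerivAt L (lam s) s := by
    intro s hs
    refine integral_hasDerivAt_right ?_ ?_ (hlamC s hs.1)
    · apply ContinuousOn.intervalIntegrable
      intro r hr
      rw [Set.uIcc_of_le hs.1] at hr
      exact (hlamC r hr.1).continuousWithinAt
    · exact ((ha.measurable.add (hdccont.measurable.div
        hc.continuous.measurable)).aestronglyMeasurable).stronglyMeasurableAtFilter
  have hψd : ∀ s ∈ Set.Icc (0:ℝ) t, HasDerivAt ψ 0 s := by
    intro s hs
    have hexp : HasDerivAt (fun s => Real.exp (-(L s)))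
        (Real.exp (-(L s)) * (-(lam s))) s := ((hLd s hs).neg).exp
    have h2 : HasDerivAt ψ _ s := (hwd s hs).mul hexp
    convert h2 using 1
    ring
  have hψt : ψ t = ψ 0 :=
    constant_of_has_deriv_right_zero
      (fun s hs => ((hψd s hs).continuousAt).continuousWithinAt)
      (fun s hs => ((hψd s ⟨hs.1, hs.2.le⟩)).hasDerivWithinAt) t
      (Set.right_mem_Icc.mpr ht)
  have hψ0 : ψ 0 = 0 := by
    simp only [hψ_def, hw_def, hx0, hp0, mul_zero, sub_zero, zero_mul]
  have hwt : w t = 0 := by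
    have h3 := hψt.trans hψ0
    simp only [hψ_def] at h3
    rcases mul_eq_zero.mp h3 with h | h
    · exact h
    · exact absurd h (Real.exp_ne_zero _)
  simp only [hw_def, hg_def] at hwt
  linarith
end

section
/- Let Σ(t) be positive definite symmetric and differentiable, P(t) invertible and differentiable, J(t) skew-symmetric, R(t) symmetric, g(t) ∈ ℝⁿˣᵏ, all continuous in t, and let x solve ẋ = (J(t) − R(t))Σ(t)x + g(t)u(t). Define x̃(t) = P(t)x(t), Σ̃ = P⁻ᵀ Σ P⁻¹, A = P J Pᵀ + Ṗ Σ⁻¹ Pᵀ, J̃ = (A − Aᵀ)/2, M̃ = (A + Aᵀ)/2, g̃ = P g and R̃ = P R Pᵀ. Then x̃ solves dx̃/dt = (J̃(t) + M̃(t) − R̃(t)) Σ̃(t) x̃ + g̃(t) u(t), J̃ is skew-symmetric, M̃ and R̃ are symmetric, and the output is invariant: g̃ᵀ Σ̃ x̃ = gᵀ Σ x for all t. -/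
open Matrix

/-- Time-varying change of coordinates `x̃ = P(t)x` for a linear port-Hamiltonian system
`ẋ = (J − R)Σx + gu`: with `A = PJPᵀ + ṖΣ⁻¹Pᵀ`, `J̃ = (A − Aᵀ)/2`, `M̃ = (A + Aᵀ)/2`,
`g̃ = Pg`, `R̃ = PRPᵀ`, and `Σ̃ = P⁻ᵀΣP⁻¹`, the new state solves
`dx̃/dt = (J̃ + M̃ − R̃)Σ̃x̃ + g̃u`, `J̃` is skew-symmetric, `M̃` and `R̃` are symmetric,
and the output is invariant: `g̃ᵀΣ̃x̃ = gᵀΣx`. -/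
theorem time_varying_change_of_coordinates
    (n k : ℕ)
    (Sg J R : ℝ → Matrix (Fin n) (Fin n) ℝ)
    (g : ℝ → Matrix (Fin n) (Fin k) ℝ)
    (P P' Sg' : ℝ → Matrix (Fin n) (Fin n) ℝ)
    (u : ℝ → Fin k → ℝ)
    (hSgpos : ∀ t, (Sg t).PosDef) (hSgsym : ∀ t, (Sg t)ᵀ = Sg t)
    (hSgdiff : ∀ t i j, HasDerivAt (fun s => Sg s i j) (Sg' t i j) t)
    (hPdiff : ∀ t i j, HasDerivAt (fun s => P s i j) (P' t i j) t)
    (hPinv : ∀ t, IsUnit (P t).det)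
    (hJ : ∀ t, (J t)ᵀ = -(J t)) (hR : ∀ t, (R t)ᵀ = R t)
    (hJc : ∀ i j, Continuous fun t => J t i j)
    (hRc : ∀ i j, Continuous fun t => R t i j)
    (hgc : ∀ i j, Continuous fun t => g t i j)
    (huc : Continuous u)
    (x : ℝ → Fin n → ℝ)
    (hx : ∀ t, HasDerivAt x (((J t - R t) * Sg t) *ᵥ x t + g t *ᵥ u t) t)
    (A Jt Mt Rt Sgt : ℝ → Matrix (Fin n) (Fin n) ℝ)
    (gt : ℝ → Matrix (Fin n) (Fin k) ℝ)
    (hA : ∀ t, A t = P t * J t * (P t)ᵀ + P' t * (Sg t)⁻¹ * (P t)ᵀ)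
    (hJt : ∀ t, Jt t = (2⁻¹ : ℝ) • (A t - (A t)ᵀ))
    (hMt : ∀ t, Mt t = (2⁻¹ : ℝ) • (A t + (A t)ᵀ))
    (hgt : ∀ t, gt t = P t * g t)
    (hRt : ∀ t, Rt t = P t * R t * (P t)ᵀ)
    (hSgt : ∀ t, Sgt t = ((P t)⁻¹)ᵀ * Sg t * (P t)⁻¹) :
    (∀ t, HasDerivAt (fun s => P s *ᵥ x s)
      (((Jt t + Mt t - Rt t) * Sgt t) *ᵥ (P t *ᵥ x t) + gt t *ᵥ u t) t) ∧
    (∀ t, (Jt t)ᵀ = -(Jt t)) ∧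
    (∀ t, (Mt t)ᵀ = Mt t) ∧
    (∀ t, (Rt t)ᵀ = Rt t) ∧
    (∀ t, (gt t)ᵀ *ᵥ (Sgt t *ᵥ (P t *ᵥ x t)) = (g t)ᵀ *ᵥ (Sg t *ᵥ x t)) := by
  have hPP : ∀ t, (P t)⁻¹ * P t = 1 := fun t => Matrix.nonsing_inv_mul _ (hPinv t)
  have hPT : ∀ t, (P t)ᵀ * ((P t)⁻¹)ᵀ = 1 := fun t => by
    rw [← Matrix.transpose_mul, hPP, Matrix.transpose_one]
  have hSS : ∀ t, (Sg t)⁻¹ * Sg t = 1 := fun t =>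
    Matrix.nonsing_inv_mul _ ((hSgpos t).det_pos.ne').isUnit
  have lem : ∀ (m : Type) [Fintype m] (t : ℝ) (X : Matrix (Fin n) m ℝ),
      Xᵀ * (P t)ᵀ * Sgt t * P t = Xᵀ * Sg t := by
    intro m _ t X
    rw [hSgt]
    calc Xᵀ * (P t)ᵀ * (((P t)⁻¹)ᵀ * Sg t * (P t)⁻¹) * P t
        = Xᵀ * ((P t)ᵀ * ((P t)⁻¹)ᵀ) * Sg t * ((P t)⁻¹ * P t) := by
          simp only [Matrix.mul_assoc]
      _ = Xᵀ * Sg t := by rw [hPT, hPP, Matrix.mul_one, Matrix.mul_one]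
  have lem' : ∀ (t : ℝ) (X : Matrix (Fin n) (Fin n) ℝ),
      X * (P t)ᵀ * Sgt t * P t = X * Sg t := fun t X => by
    have := lem (Fin n) t Xᵀ; rwa [Matrix.transpose_transpose] at this
  have hJM : ∀ t, Jt t + Mt t = A t := fun t => by
    rw [hJt, hMt, ← smul_add]
    have : A t - (A t)ᵀ + (A t + (A t)ᵀ) = (2 : ℝ) • A t := by
      rw [two_smul]; abel
    rw [this, smul_smul]; norm_num
  have key : ∀ t, (Jt t + Mt t - Rt t) * Sgt t * P t = P' t + P t * (J t - R t) * Sg t := by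
    intro t
    rw [hJM, hA, hRt, Matrix.sub_mul, Matrix.sub_mul, Matrix.add_mul, Matrix.add_mul,
      lem' t (P t * J t), lem' t (P' t * (Sg t)⁻¹), lem' t (P t * R t),
      Matrix.mul_assoc (P' t), hSS, Matrix.mul_one]
    rw [Matrix.mul_sub (P t), Matrix.sub_mul]
    abel
  refine ⟨?_, ?_, ?_, ?_, ?_⟩
  · intro t
    have hrhs : ((Jt t + Mt t - Rt t) * Sgt t) *ᵥ (P t *ᵥ x t) + gt t *ᵥ u t
        = P' t *ᵥ x t + P t *ᵥ ((((J t - R t) * Sg t) *ᵥ x t) + g t *ᵥ u t) := by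
      rw [Matrix.mulVec_mulVec, key, hgt, Matrix.mulVec_add, Matrix.add_mulVec,
        Matrix.mulVec_mulVec, Matrix.mulVec_mulVec, Matrix.mul_assoc, add_assoc]
    rw [hrhs]
    apply hasDerivAt_pi.mpr
    intro i
    have hxi : ∀ j, HasDerivAt (fun s => x s j)
        ((((J t - R t) * Sg t) *ᵥ x t + g t *ᵥ u t) j) t := fun j =>
      hasDerivAt_pi.mp (hx t) j
    have : HasDerivAt (fun s => ∑ j, P s i j * x s j)
        (∑ j, (P' t i j * x t j + P t i j *
          ((((J t - R t) * Sg t) *ᵥ x t + g t *ᵥ u t) j))) t :=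
      HasDerivAt.fun_sum fun j _ => (hPdiff t i j).mul (hxi j)
    simpa only [Matrix.mulVec, dotProduct, Finset.sum_add_distrib, Pi.add_apply] using this
  · intro t
    rw [hJt, Matrix.transpose_smul, Matrix.transpose_sub, Matrix.transpose_transpose,
      ← smul_neg, neg_sub]
  · intro t
    rw [hMt, Matrix.transpose_smul, Matrix.transpose_add, Matrix.transpose_transpose,
      add_comm]
  · intro t
    rw [hRt]
    simp only [Matrix.transpose_mul, Matrix.transpose_transpose, hR, Matrix.mul_assoc]
  · intro t
    rw [hgt, Matrix.mulVec_mulVec, Matrix.mulVec_mulVec, Matrix.transpose_mul,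
      Matrix.mulVec_mulVec]
    rw [lem (Fin k) t (g t)]
end

section
/- Let R_ε, R₂, C, t_f > 0, and set κ = R_ε/R₂, τ₂ = R₂C, λ = (2/τ₂)√(1 + 1/κ), Λ = (√κ − √(κ+1))/(√κ + √(κ+1)), S₀ = −½(√κ − √(κ+1))². Then Λ² < 1, the denominator e^{λ(t_f−t)} − Λ² is positive for all t ≤ t_f, and the function S(t) = S₀ (e^{λ(t_f−t)} − 1)/(e^{λ(t_f−t)} − Λ²) is differentiable on (−∞, t_f] and satisfies the Riccati differential equation Ṡ = (2/τ₂)S + (1/(R_ε C))(S + ½)² with terminal condition S(t_f) = 0. -/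
set_option maxHeartbeats 4000000 in
lemma riccati_alg (a b E t : ℝ) (ha : 0 < a) (hb : 0 < b) (ht : 0 < t)
    (hb2 : b^2 = a^2 + 1) (hD : 0 < E - ((a-b)/(a+b))^2) :
    (2/t) * ((-(1/2)*(a-b)^2)*(E-1)/(E-((a-b)/(a+b))^2))
      + (1/(a^2*t)) * ((-(1/2)*(a-b)^2)*(E-1)/(E-((a-b)/(a+b))^2) + 1/2)^2
    = ((-(1/2)*(a-b)^2) * (-(2*b/(a*t)) * E) * (E - ((a-b)/(a+b))^2)
        - (-(1/2)*(a-b)^2)*(E-1) * (-(2*b/(a*t))*E)) / (E-((a-b)/(a+b))^2)^2 := by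
  have hs : 0 < a + b := by linarith
  set s := a + b with hsdef
  have hs0 : s ≠ 0 := ne_of_gt hs
  have ha' : a = (s^2-1)/(2*s) := by
    rw [eq_div_iff (by positivity)]
    linear_combination -hb2
  have hb' : b = (s^2+1)/(2*s) := by
    rw [eq_div_iff (by positivity)]
    linear_combination hb2
  have hs1 : 0 < s^2 - 1 := by
    have h : s^2 - 1 = 2*a*s := by linear_combination hb2
    rw [h]; positivity
  have hab2 : a - b = -(1/s) := by
    rw [neg_div' , eq_div_iff hs0]
    linear_combination -hb2
  have habsq : (a-b)^2 = 1/s^2 := by rw [hab2, neg_sq, div_pow, one_pow]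
  have hL : (a - b)/s = -(1/s^2) := by
    rw [hab2]
    field_simp
  rw [hL] at hD ⊢
  rw [habsq]
  rw [ha', hb']
  have hD' : E - (-(1/s^2))^2 ≠ 0 := ne_of_gt hD
  have ht' := ne_of_gt ht
  have hs1' := ne_of_gt hs1
  have hDs : (0:ℝ) < E * (s^2)^2 - 1 := by
    have h4 : E * (s^2)^2 - 1 = (E - (-(1/s^2))^2) * (s^2)^2 := by
      field_simp
    rw [h4]; positivity
  have hDs' : E * (s^2)^2 - 1 ≠ 0 := ne_of_gt hDs
  have h4' : s^4*E - 1 ≠ 0 := by convert hDs' using 1; ring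
  field_simp
  ring

/-- The explicit function `S(t) = S₀(e^{λ(t_f−t)} − 1)/(e^{λ(t_f−t)} − Λ²)` solves the control
Riccati equation `Ṡ = (2/τ₂)S + (1/(R_ε C))(S + ½)²` with terminal condition `S(t_f) = 0`;
moreover `Λ² < 1` and the denominator is positive for `t ≤ t_f`. -/
theorem riccati_explicit_solution
    (Rε R₂ C tf : ℝ) (hRε : 0 < Rε) (hR₂ : 0 < R₂) (hC : 0 < C) (htf : 0 < tf)
    (κ τ₂ lam Lam S₀ : ℝ)
    (hκ : κ = Rε / R₂) (hτ₂ : τ₂ = R₂ * C)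
    (hlam : lam = (2 / τ₂) * Real.sqrt (1 + 1 / κ))
    (hLam : Lam = (Real.sqrt κ - Real.sqrt (κ + 1)) / (Real.sqrt κ + Real.sqrt (κ + 1)))
    (hS₀ : S₀ = -(1/2) * (Real.sqrt κ - Real.sqrt (κ + 1))^2)
    (S : ℝ → ℝ)
    (hS : ∀ t, S t = S₀ * (Real.exp (lam * (tf - t)) - 1) / (Real.exp (lam * (tf - t)) - Lam^2)) :
    Lam^2 < 1 ∧
    (∀ t ≤ tf, Real.exp (lam * (tf - t)) - Lam^2 > 0) ∧
    S tf = 0 ∧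
    (∀ t ≤ tf, HasDerivAt S ((2 / τ₂) * S t + (1 / (Rε * C)) * (S t + 1/2)^2) t) := by
  have hκpos : 0 < κ := by rw [hκ]; positivity
  have hτpos : 0 < τ₂ := by rw [hτ₂]; positivity
  set a := Real.sqrt κ with ha
  set b := Real.sqrt (κ + 1) with hbdef
  have hapos : 0 < a := Real.sqrt_pos.mpr hκpos
  have hbpos : 0 < b := Real.sqrt_pos.mpr (by linarith)
  have ha2 : a^2 = κ := Real.sq_sqrt hκpos.le
  have hb2 : b^2 = κ + 1 := Real.sq_sqrt (by linarith)
  have hb2' : b^2 = a^2 + 1 := by rw [hb2, ha2]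
  have hab : 0 < a + b := by linarith
  have hlam' : lam = 2 * b / (a * τ₂) := by
    rw [hlam]
    have h1 : (1 : ℝ) + 1/κ = (κ+1)/κ := by field_simp
    rw [h1, Real.sqrt_div (by linarith) κ, ← hbdef, ← ha]
    field_simp
  have hlampos : 0 < lam := by rw [hlam']; positivity
  have hL1 : Lam^2 < 1 := by
    rw [hLam, div_pow]
    rw [div_lt_one (by positivity)]
    nlinarith [hapos, hbpos]
  have hDen : ∀ t ≤ tf, Real.exp (lam * (tf - t)) - Lam^2 > 0 := by
    intro t ht
    have h1 : (1:ℝ) ≤ Real.exp (lam * (tf - t)) := by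
      rw [← Real.exp_zero]
      exact Real.exp_le_exp.mpr (by nlinarith)
    linarith
  refine ⟨hL1, hDen, ?_, ?_⟩
  · rw [hS tf]; simp
  · intro t ht
    have hfun : S = fun u => S₀ * (Real.exp (lam * (tf - u)) - 1) / (Real.exp (lam * (tf - u)) - Lam^2) :=
      funext hS
    set E := Real.exp (lam * (tf - t)) with hE
    have hDpos : 0 < E - Lam^2 := hDen t ht
    have hexp : HasDerivAt (fun u => Real.exp (lam * (tf - u))) (-lam * E) t := by
      have h1 : HasDerivAt (fun u : ℝ => lam * (tf - u)) (-lam) t := by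
        have := ((hasDerivAt_const t tf).sub (hasDerivAt_id t)).const_mul lam
        simpa using this
      have := (Real.hasDerivAt_exp (lam * (tf - t))).comp t h1
      simpa [hE, mul_comm, Function.comp_def] using this
    have hNum : HasDerivAt (fun u => S₀ * (Real.exp (lam * (tf - u)) - 1)) (S₀ * (-lam * E)) t :=
      (hexp.sub_const 1).const_mul S₀
    have hDenD : HasDerivAt (fun u => Real.exp (lam * (tf - u)) - Lam^2) (-lam * E) t :=
      hexp.sub_const _
    have hder := hNum.div hDenD (ne_of_gt hDpos)
    have hderS : HasDerivAt S ((S₀ * (-lam * E) * (E - Lam ^ 2) - S₀ * (E - 1) * (-lam * E)) / (E - Lam ^ 2) ^ 2) t := by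
      rw [hfun]; exact hder
    convert hderS using 1
    rw [hS t, ← hE]
    have hRC : Rε * C = a^2 * τ₂ := by
      rw [ha2, hκ, hτ₂]; field_simp
    rw [hRC, hlam', hLam, hS₀]
    exact riccati_alg a b E τ₂ hapos hbpos hτpos hb2' (by rw [← hLam]; exact hDpos)
end

section
/- Let R_ε, R₂, C, T > 0, κ = R_ε/R₂, τ₂ = R₂C, λ = (2/τ₂)√(1 + 1/κ), Λ = (√κ − √(κ+1))/(√κ + √(κ+1)), S₀ = −½(√κ − √(κ+1))², and for each t_f > 0 define S_{t_f}(t) = S₀ (e^{λ(t_f−t)} − 1)/(e^{λ(t_f−t)} − Λ²) and the optimal extracted work W*(t_f) = −S_{t_f}(0)·T − (2T/τ₂) ∫₀^{t_f} S_{t_f}(t) dt. Then the asymptotic extracted power satisfies lim_{t_f → ∞} W*(t_f)/t_f = −2TS₀/τ₂ = (T/τ₂)(√(κ+1) − √κ)². -/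
open Filter intervalIntegral

/-- The optimal extracted work `W*(t_f) = −S_{t_f}(0)T − (2T/τ₂)∫₀^{t_f} S_{t_f}(t) dt` satisfies
`lim_{t_f→∞} W*(t_f)/t_f = −2TS₀/τ₂ = (T/τ₂)(√(κ+1) − √κ)²`. -/
theorem asymptotic_extracted_power
    (Rε R₂ C T : ℝ) (hRε : 0 < Rε) (hR₂ : 0 < R₂) (hC : 0 < C) (hT : 0 < T)
    (κ τ₂ lam Lam S₀ : ℝ)
    (hκ : κ = Rε / R₂) (hτ₂ : τ₂ = R₂ * C)
    (hlam : lam = (2 / τ₂) * Real.sqrt (1 + 1 / κ))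
    (hLam : Lam = (Real.sqrt κ - Real.sqrt (κ + 1)) / (Real.sqrt κ + Real.sqrt (κ + 1)))
    (hS₀ : S₀ = -(1/2) * (Real.sqrt κ - Real.sqrt (κ + 1))^2)
    (S : ℝ → ℝ → ℝ)
    (hS : ∀ tf t, S tf t
      = S₀ * (Real.exp (lam * (tf - t)) - 1) / (Real.exp (lam * (tf - t)) - Lam^2))
    (W : ℝ → ℝ)
    (hW : ∀ tf, W tf = -(S tf 0) * T - (2 * T / τ₂) * ∫ t in (0:ℝ)..tf, S tf t) :
    Tendsto (fun tf => W tf / tf) atTop (nhds (-(2 * T * S₀) / τ₂)) ∧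
    -(2 * T * S₀) / τ₂ = (T / τ₂) * (Real.sqrt (κ + 1) - Real.sqrt κ)^2 := by
  -- basic positivity facts
  have hκ0 : 0 < κ := by rw [hκ]; positivity
  have hτ0 : 0 < τ₂ := by rw [hτ₂]; positivity
  have hsκ : 0 < Real.sqrt κ := Real.sqrt_pos.2 hκ0
  have hsκ1 : 0 < Real.sqrt (κ + 1) := Real.sqrt_pos.2 (by linarith)
  have hlt : Real.sqrt κ < Real.sqrt (κ + 1) :=
    Real.sqrt_lt_sqrt hκ0.le (by linarith)
  have hden : 0 < Real.sqrt κ + Real.sqrt (κ + 1) := by linarith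
  have hLneg : Lam < 0 := by
    rw [hLam]; exact div_neg_of_neg_of_pos (by linarith) hden
  have hLgt : -1 < Lam := by
    rw [hLam, lt_div_iff₀ hden]; nlinarith
  set a : ℝ := Lam ^ 2 with ha_def
  have ha0 : 0 < a := by nlinarith
  have ha1 : a < 1 := by nlinarith
  clear_value a
  have hlam0 : 0 < lam := by
    rw [hlam]
    have : 0 < Real.sqrt (1 + 1 / κ) := Real.sqrt_pos.2 (by positivity)
    positivity
  -- closed form of the integral
  set c : ℝ := S₀ * (a - 1) / (a * lam) with hc_def
  clear_value c
  have hpos_inner : ∀ x : ℝ, x ≤ 0 → 0 < 1 - a * Real.exp x := by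
    intro x hx
    have h1 : Real.exp x ≤ 1 := Real.exp_le_one_iff.2 hx
    nlinarith
  have hint : ∀ tf : ℝ, 0 ≤ tf →
      (∫ t in (0:ℝ)..tf, S tf t)
        = S₀ * tf - c * (Real.log (1 - a)
            - Real.log (1 - a * Real.exp (-lam * tf))) := by
    intro tf htf
    have hderiv : ∀ t ∈ Set.uIcc (0:ℝ) tf,
        HasDerivAt (fun t => S₀ * t
            - c * Real.log (1 - a * Real.exp (lam * t - lam * tf))) (S tf t) t := by
      intro t ht
      rw [Set.uIcc_of_le htf] at ht
      have htle : t ≤ tf := ht.2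
      have harg : lam * t - lam * tf ≤ 0 := by nlinarith
      have hg : 0 < 1 - a * Real.exp (lam * t - lam * tf) := hpos_inner _ harg
      set e : ℝ := Real.exp (lam * t - lam * tf) with he_def
      have he0 : 0 < e := Real.exp_pos _
      have h1 : HasDerivAt (fun t : ℝ => lam * t - lam * tf) lam t := by
        simpa using ((hasDerivAt_id t).const_mul lam).sub_const (lam * tf)
      have h2 : HasDerivAt (fun t : ℝ => 1 - a * Real.exp (lam * t - lam * tf))
          (-(a * (e * lam))) t := by
        simpa using ((h1.exp.const_mul a).const_sub 1)
      have h3 : HasDerivAt (fun t : ℝ => Real.log (1 - a * Real.exp (lam * t - lam * tf)))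
          (-(a * (e * lam)) / (1 - a * e)) t := h2.log (by rw [← he_def]; linarith)
      have h4 := ((hasDerivAt_id t).const_mul S₀).sub (h3.const_mul c)
      have hEe : Real.exp (lam * (tf - t)) = e⁻¹ := by
        rw [he_def, ← Real.exp_neg]; ring_nf
      rw [hS, hEe]
      convert h4 using 1
      case e'_4 => rfl
      case e'_5 => rfl
      case e'_8 => rfl
      rw [hc_def]
      have h1ae : 1 - a * e ≠ 0 := by linarith
      have hinv : e⁻¹ - a ≠ 0 := by
        have : e⁻¹ - a = (1 - a * e) / e := by field_simp
        rw [this]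
        exact div_ne_zero h1ae (ne_of_gt he0)
      have h1ae' : 1 - e * a ≠ 0 := by rw [mul_comm]; exact h1ae
      field_simp [h1ae', h1ae, he0.ne', hlam0.ne', ha0.ne']
      ring
    all_goals try rfl
    have hcont : ContinuousOn (S tf) (Set.uIcc (0:ℝ) tf) := by
      have : ContinuousOn (fun t => S₀ * (Real.exp (lam * (tf - t)) - 1)
          / (Real.exp (lam * (tf - t)) - a)) (Set.uIcc (0:ℝ) tf) := by
        have hce : Continuous fun t : ℝ => Real.exp (lam * (tf - t)) :=
          Real.continuous_exp.comp (continuous_const.mul (continuous_const.sub continuous_id))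
        apply ContinuousOn.div
        · exact (continuous_const.mul (hce.sub continuous_const)).continuousOn
        · exact (hce.sub continuous_const).continuousOn
        · intro t ht
          rw [Set.uIcc_of_le htf] at ht
          have h0 : 0 ≤ lam * (tf - t) := mul_nonneg hlam0.le (by linarith [ht.2])
          have h1 : (1:ℝ) ≤ Real.exp (lam * (tf - t)) := Real.one_le_exp h0
          exact ne_of_gt (by linarith)
      exact this.congr (fun t _ => hS tf t)
    rw [intervalIntegral.integral_eq_sub_of_hasDerivAt hderiv
      (hcont.intervalIntegrable)]
    have h1 : lam * tf - lam * tf = 0 := by ring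
    have h2 : lam * 0 - lam * tf = -lam * tf := by ring
    rw [h1, h2, Real.exp_zero]
    ring
  -- the bounded correction term
  set B : ℝ → ℝ := fun tf => -(S tf 0) * T
      + (2 * T / τ₂) * (c * (Real.log (1 - a)
          - Real.log (1 - a * Real.exp (-lam * tf)))) with hB_def
  have hWeq : ∀ᶠ tf in atTop, W tf / tf = -(2 * T * S₀) / τ₂ + B tf * tf⁻¹ := by
    filter_upwards [eventually_ge_atTop (1:ℝ)] with tf htf
    have htf0 : (0:ℝ) < tf := by linarith
    rw [hW, hint tf htf0.le, hB_def]
    field_simp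
    ring
  -- limits of the pieces
  have hmul : Tendsto (fun tf : ℝ => lam * tf) atTop atTop :=
    tendsto_id.const_mul_atTop hlam0
  have hexp : Tendsto (fun tf : ℝ => Real.exp (-lam * tf)) atTop (nhds 0) := by
    have := Real.tendsto_exp_neg_atTop_nhds_zero.comp hmul
    simpa [Function.comp_def, neg_mul] using this
  have hden2 : Tendsto (fun tf : ℝ => 1 - a * Real.exp (-lam * tf)) atTop (nhds 1) := by
    have := (hexp.const_mul a).const_sub 1
    simpa using this
  have hlog : Tendsto (fun tf : ℝ => Real.log (1 - a * Real.exp (-lam * tf)))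
      atTop (nhds 0) := by
    have := (Real.continuousAt_log one_ne_zero).tendsto.comp hden2
    simpa [Function.comp_def] using this
  have hS0 : Tendsto (fun tf : ℝ => S tf 0) atTop (nhds S₀) := by
    have heq : ∀ᶠ tf in atTop, S₀ * (1 - Real.exp (-lam * tf))
        / (1 - a * Real.exp (-lam * tf)) = S tf 0 := by
      filter_upwards [eventually_ge_atTop (0:ℝ)] with tf htf
      rw [hS]
      have he0 : 0 < Real.exp (lam * (tf - 0)) := Real.exp_pos _
      have hrel : Real.exp (-lam * tf) = (Real.exp (lam * (tf - 0)))⁻¹ := by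
        rw [← Real.exp_neg]; ring_nf
      have hlt0 : 0 ≤ lam * tf := mul_nonneg hlam0.le htf
      have hd : 0 < 1 - a * Real.exp (-lam * tf) := hpos_inner _ (by linarith [neg_mul lam tf])
      have hd2 : Real.exp (lam * (tf - 0)) - a ≠ 0 := by
        have h1 : (1:ℝ) ≤ Real.exp (lam * (tf - 0)) :=
          Real.one_le_exp (by simpa using hlt0)
        exact ne_of_gt (by linarith)
      rw [hrel]
      rw [hrel] at hd
      field_simp
    have hlim : Tendsto (fun tf : ℝ => S₀ * (1 - Real.exp (-lam * tf))
        / (1 - a * Real.exp (-lam * tf))) atTop (nhds S₀) := by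
      have hnum : Tendsto (fun tf : ℝ => S₀ * (1 - Real.exp (-lam * tf)))
          atTop (nhds S₀) := by
        have := (hexp.const_sub 1).const_mul S₀
        simpa using this
      have := hnum.div hden2 one_ne_zero
      rw [div_one] at this
      exact this
    exact hlim.congr' heq
  have hB : Tendsto B atTop
      (nhds (-S₀ * T + (2 * T / τ₂) * (c * (Real.log (1 - a) - 0)))) := by
    apply Tendsto.add
    · exact (hS0.neg).mul_const T
    · exact (((tendsto_const_nhds.sub hlog).const_mul c).const_mul (2 * T / τ₂))
  have hBz : Tendsto (fun tf => B tf * tf⁻¹) atTop (nhds 0) := by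
    have := hB.mul tendsto_inv_atTop_zero
    simpa using this
  constructor
  · have : Tendsto (fun tf : ℝ => -(2 * T * S₀) / τ₂ + B tf * tf⁻¹) atTop
        (nhds (-(2 * T * S₀) / τ₂)) := by
      simpa using (tendsto_const_nhds.add hBz)
    exact Tendsto.congr' (EventuallyEq.symm hWeq) this
  · rw [hS₀]; ring
end

section
/- Let T_hot, T_cold, τ₂, t_hot, t_cold, τ₁^hot > 0 and τ₁^cold > τ₂ with the cycle condition t_hot/τ₁^hot = t_cold/τ₁^cold. Define the effective temperatures T'_hot = T_hot/(1 + τ₂/τ₁^hot) and T'_cold = T_cold/(1 − τ₂/τ₁^cold), and the heats Q_hot = T'_hot · t_hot/τ₁^hot and Q_cold = −T'_cold · t_cold/τ₁^cold. Then the efficiency of the cycle satisfies η := (Q_hot + Q_cold)/Q_hot = 1 − T'_cold/T'_hot = 1 − (T_cold/T_hot) · (1 + τ₂/τ₁^hot)/(1 − τ₂/τ₁^cold). -/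
/-- Efficiency of the finite-time Carnot cycle: with effective temperatures
`T'_hot = T_hot/(1 + τ₂/τ₁ʰᵒᵗ)`, `T'_cold = T_cold/(1 − τ₂/τ₁ᶜᵒˡᵈ)`, heats
`Q_hot = T'_hot t_hot/τ₁ʰᵒᵗ`, `Q_cold = −T'_cold t_cold/τ₁ᶜᵒˡᵈ`, and the cycle condition
`t_hot/τ₁ʰᵒᵗ = t_cold/τ₁ᶜᵒˡᵈ`, the efficiency `η = (Q_hot + Q_cold)/Q_hot` equals
`1 − T'_cold/T'_hot = 1 − (T_cold/T_hot)(1 + τ₂/τ₁ʰᵒᵗ)/(1 − τ₂/τ₁ᶜᵒˡᵈ)`. -/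
theorem finite_time_carnot_efficiency
    (Thot Tcold τ₂ thot tcold τ₁hot τ₁cold : ℝ)
    (hThot : 0 < Thot) (hTcold : 0 < Tcold) (hτ₂ : 0 < τ₂)
    (hthot : 0 < thot) (htcold : 0 < tcold) (hτ₁hot : 0 < τ₁hot)
    (hτ₁cold : τ₁cold > τ₂)
    (hcyc : thot / τ₁hot = tcold / τ₁cold)
    (T'hot T'cold Qhot Qcold : ℝ)
    (hT'hot : T'hot = Thot / (1 + τ₂ / τ₁hot))
    (hT'cold : T'cold = Tcold / (1 - τ₂ / τ₁cold))
    (hQhot : Qhot = T'hot * (thot / τ₁hot))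
    (hQcold : Qcold = -(T'cold * (tcold / τ₁cold))) :
    (Qhot + Qcold) / Qhot = 1 - T'cold / T'hot ∧
    (Qhot + Qcold) / Qhot
      = 1 - (Tcold / Thot) * ((1 + τ₂ / τ₁hot) / (1 - τ₂ / τ₁cold)) := by
  have hr : 0 < thot / τ₁hot := div_pos hthot hτ₁hot
  have hdh : 0 < 1 + τ₂ / τ₁hot := by positivity
  have hdc : 0 < 1 - τ₂ / τ₁cold := by
    have hc : 0 < τ₁cold := lt_trans hτ₂ hτ₁cold
    have : τ₂ / τ₁cold < 1 := (div_lt_one hc).2 hτ₁cold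
    linarith
  have hT'h : 0 < T'hot := by rw [hT'hot]; exact div_pos hThot hdh
  have h1 : (Qhot + Qcold) / Qhot = 1 - T'cold / T'hot := by
    rw [hQhot, hQcold, ← hcyc]
    field_simp
    ring
  refine ⟨h1, h1.trans ?_⟩
  rw [hT'hot, hT'cold]
  field_simp
end

section
/- Let T_hot > T_cold > 0 and τ₂ > 0. For τ₁^hot > 0 and τ₁^cold > τ₂, define the average mechanical power w̄(τ₁^hot, τ₁^cold) = (1/(τ₁^hot + τ₁^cold)) · ( T_hot/(1 + τ₂/τ₁^hot) − T_cold/(1 − τ₂/τ₁^cold) ). Then w̄(τ₁^hot, τ₁^cold) ≤ (√T_hot − √T_cold)²/(4τ₂) for all admissible (τ₁^hot, τ₁^cold), and equality holds at τ₁^hot = τ₁^cold = τ₂ · (√T_hot + √T_cold)/(√T_hot − √T_cold); i.e., the maximum power of the finite-time Carnot cycle is the Orlov–Berry value (√T_hot − √T_cold)²/(4τ₂). -/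
/-- The average mechanical power
`w̄(τ₁ʰᵒᵗ, τ₁ᶜᵒˡᵈ) = (T_hot/(1 + τ₂/τ₁ʰᵒᵗ) − T_cold/(1 − τ₂/τ₁ᶜᵒˡᵈ))/(τ₁ʰᵒᵗ + τ₁ᶜᵒˡᵈ)` of the
finite-time Carnot cycle is bounded by the Orlov–Berry value `(√T_hot − √T_cold)²/(4τ₂)`, with
equality at `τ₁ʰᵒᵗ = τ₁ᶜᵒˡᵈ = τ₂(√T_hot + √T_cold)/(√T_hot − √T_cold)`. -/
theorem maximum_power_orlov_berry
    (Thot Tcold τ₂ : ℝ) (hT : Thot > Tcold) (hTc : Tcold > 0) (hτ₂ : τ₂ > 0)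
    (w : ℝ → ℝ → ℝ)
    (hw : ∀ τ₁hot τ₁cold, w τ₁hot τ₁cold
      = (1 / (τ₁hot + τ₁cold)) *
        (Thot / (1 + τ₂ / τ₁hot) - Tcold / (1 - τ₂ / τ₁cold))) :
    (∀ τ₁hot > 0, ∀ τ₁cold > τ₂,
      w τ₁hot τ₁cold ≤ (Real.sqrt Thot - Real.sqrt Tcold)^2 / (4 * τ₂)) ∧
    w (τ₂ * (Real.sqrt Thot + Real.sqrt Tcold) / (Real.sqrt Thot - Real.sqrt Tcold))
      (τ₂ * (Real.sqrt Thot + Real.sqrt Tcold) / (Real.sqrt Thot - Real.sqrt Tcold))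
      = (Real.sqrt Thot - Real.sqrt Tcold)^2 / (4 * τ₂) := by
  set s := Real.sqrt Thot with hs
  set t := Real.sqrt Tcold with ht
  have ht0 : 0 < t := Real.sqrt_pos.mpr hTc
  have hst : t < s := Real.sqrt_lt_sqrt hTc.le hT
  have hs2 : s ^ 2 = Thot := Real.sq_sqrt (hTc.trans hT).le
  have ht2 : t ^ 2 = Tcold := Real.sq_sqrt hTc.le
  have hstpos : 0 < s - t := sub_pos.mpr hst
  constructor
  · intro a ha b hb
    have hb' : (0:ℝ) < b - τ₂ := sub_pos.mpr hb
    have hb0 : (0:ℝ) < b := hτ₂.trans hb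
    have haτ : (0:ℝ) < a + τ₂ := by linarith
    have e1 : 1 + τ₂ / a = (a + τ₂) / a := by field_simp
    have e2 : 1 - τ₂ / b = (b - τ₂) / b := by field_simp
    rw [hw, e1, e2, div_div_eq_mul_div, div_div_eq_mul_div, ← hs2, ← ht2,
      div_sub_div _ _ haτ.ne' hb'.ne', one_div, inv_mul_eq_div, div_div,
      div_le_div_iff₀ (by positivity) (by positivity)]
    nlinarith [mul_nonneg (sq_nonneg ((s - t) * a - (s + t) * τ₂)) hb'.le,
      mul_nonneg (sq_nonneg ((s - t) * b - (s + t) * τ₂)) haτ.le]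
  · have hA0 : 0 < τ₂ * (s + t) / (s - t) := by positivity
    have hAτ : τ₂ < τ₂ * (s + t) / (s - t) := by
      rw [lt_div_iff₀ hstpos]; nlinarith
    have hb' : (0:ℝ) < τ₂ * (s + t) / (s - t) - τ₂ := sub_pos.mpr hAτ
    have e1 : 1 + τ₂ / (τ₂ * (s + t) / (s - t)) ≠ 0 := by positivity
    have e2 : 1 - τ₂ / (τ₂ * (s + t) / (s - t)) ≠ 0 := by
      have : τ₂ / (τ₂ * (s + t) / (s - t)) < 1 := (div_lt_one hA0).mpr hAτ
      linarith
    rw [hw, ← hs2, ← ht2]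
    have htne : t ≠ 0 := ht0.ne'
    have hτne : τ₂ ≠ 0 := hτ₂.ne'
    have h1 : t * t⁻¹ = 1 := mul_inv_cancel₀ htne
    have h2 : τ₂ * τ₂⁻¹ = 1 := mul_inv_cancel₀ hτne
    have hsne : s + t ≠ 0 := by positivity
    have hdne : s - t ≠ 0 := hstpos.ne'
    have f1 : 1 + τ₂ / (τ₂ * (s + t) / (s - t)) = 2 * s / (s + t) := by
      field_simp; ring
    have f2 : 1 - τ₂ / (τ₂ * (s + t) / (s - t)) = 2 * t / (s + t) := by
      field_simp; ring
    rw [f1, f2]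
    have hsne' : s ≠ 0 := (ht0.trans hst).ne'
    field_simp
    ring
end

section
/- Let T_hot > T_cold > 0 and τ₂ > 0, and set τ₁^hot = τ₁^cold = τ₂ · (√T_hot + √T_cold)/(√T_hot − √T_cold) (the maximum-power operating point, which satisfies τ₁^cold > τ₂). Then the efficiency η = 1 − (T_cold/T_hot) · (1 + τ₂/τ₁^hot)/(1 − τ₂/τ₁^cold) at this operating point equals the Chambadal–Novikov efficiency: η = 1 − √(T_cold/T_hot). -/
/-- At the maximum-power operating point `τ₁ʰᵒᵗ = τ₁ᶜᵒˡᵈ = τ₂(√T_hot + √T_cold)/(√T_hot − √T_cold)`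
(which is admissible, i.e. `τ₁ > τ₂`), the finite-time Carnot cycle efficiency
`η = 1 − (T_cold/T_hot)(1 + τ₂/τ₁)/(1 − τ₂/τ₁)` equals the Chambadal–Novikov efficiency
`1 − √(T_cold/T_hot)`. -/
theorem chambadal_novikov_efficiency
    (Thot Tcold τ₂ : ℝ) (hT : Thot > Tcold) (hTc : Tcold > 0) (hτ₂ : τ₂ > 0)
    (τ₁ : ℝ)
    (hτ₁ : τ₁ = τ₂ * (Real.sqrt Thot + Real.sqrt Tcold) / (Real.sqrt Thot - Real.sqrt Tcold)) :
    τ₁ > τ₂ ∧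
    1 - (Tcold / Thot) * ((1 + τ₂ / τ₁) / (1 - τ₂ / τ₁))
      = 1 - Real.sqrt (Tcold / Thot) := by
  set s := Real.sqrt Thot with hs
  set c := Real.sqrt Tcold with hc
  have hc0 : 0 < c := Real.sqrt_pos.mpr hTc
  have hsc : c < s := Real.sqrt_lt_sqrt hTc.le hT
  have hs0 : 0 < s := hc0.trans hsc
  have hd : 0 < s - c := by linarith
  have hsum : 0 < s + c := by linarith
  have hτ₁pos : 0 < τ₁ := by
    rw [hτ₁]; positivity
  have hgt : τ₁ > τ₂ := by
    rw [hτ₁, gt_iff_lt, lt_div_iff₀ hd]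
    nlinarith
  refine ⟨hgt, ?_⟩
  have hratio : τ₂ / τ₁ = (s - c) / (s + c) := by
    rw [hτ₁]
    field_simp
  have hThot : Thot = s * s := (Real.mul_self_sqrt (by linarith : (0:ℝ) ≤ Thot)).symm
  have hTcold : Tcold = c * c := (Real.mul_self_sqrt hTc.le).symm
  have hsq : Real.sqrt (Tcold / Thot) = c / s := by
    rw [Real.sqrt_div hTc.le]
  rw [hratio, hsq, hThot, hTcold]
  have h1 : 1 - (s - c) / (s + c) = 2 * c / (s + c) := by field_simp; ring
  have h2 : 1 + (s - c) / (s + c) = 2 * s / (s + c) := by field_simp; ring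
  rw [h1, h2]
  field_simp
end
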